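/- Let G be a finite connected simple graph of order n ≥ 3. Then rvcl(G) = n if and only if G is isomorphic to the complete graph K_n. -/

import Mathlib

namespace LocatingRainbow

open SimpleGraph

variable {V : Type*}

/-- The internal vertices of a walk: its support without the endpoints. -/
def internalVertices {G : SimpleGraph V} {u v : V} (p : G.Walk u v) : List V :=
  p.support.tail.dropLast

/-- `c` is a rainbow vertex coloring of `G` (with colors in `Fin k`) if any two distinct
vertices are joined by a path whose internal vertices have pairwise distinct colors. -/
def IsRainbowVertexColoring (G : SimpleGraph V) {k : ℕ} (c : V → Fin k) : Prop :=
  ∀ u v : V, u ≠ v → ∃ p : G.Walk u v, p.IsPath ∧ ((internalVertices p).map c).Nodup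

/-- The distance from a vertex `v` to the color class of the color `i`. -/
noncomputable def distToColor (G : SimpleGraph V) {k : ℕ} (c : V → Fin k) (v : V) (i : Fin k) :
    ℕ :=
  sInf {m | ∃ y, c y = i ∧ G.dist v y = m}

/-- The rainbow code of a vertex `v`: the vector of distances to all color classes. -/
noncomputable def rainbowCode (G : SimpleGraph V) {k : ℕ} (c : V → Fin k) (v : V) :
    Fin k → ℕ :=
  fun i => distToColor G c v i

/-- `c` is a locating rainbow coloring if it is a rainbow vertex coloring and distinct
vertices have distinct rainbow codes. -/
def IsLocatingRainbowColoring (G : SimpleGraph V) {k : ℕ} (c : V → Fin k) : Prop :=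
  IsRainbowVertexColoring G c ∧ Function.Injective (rainbowCode G c)

/-- The rainbow vertex connection number of `G`. -/
noncomputable def rvc (G : SimpleGraph V) : ℕ :=
  sInf {k | ∃ c : V → Fin k, IsRainbowVertexColoring G c}

/-- The locating rainbow connection number of `G`. -/
noncomputable def rvcl (G : SimpleGraph V) : ℕ :=
  sInf {k | ∃ c : V → Fin k, IsLocatingRainbowColoring G c}

end LocatingRainbow

section Aux

open SimpleGraph LocatingRainbow

variable {V : Type*} {G : SimpleGraph V} {k : ℕ}

private lemma distToColor_self (c : V → Fin k) (x : V) : distToColor G c x (c x) = 0 :=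
  Nat.sInf_eq_zero.mpr (Or.inl ⟨x, rfl, SimpleGraph.dist_self⟩)

private lemma eq_of_distToColor_eq_zero (hG : G.Connected) (c : V → Fin k) {y : V} {i : Fin k}
    (hne : ∃ z, c z = i) (h : distToColor G c y i = 0) : c y = i := by
  rcases Nat.sInf_eq_zero.mp h with h0 | h0
  · obtain ⟨z, hz, hd⟩ := h0
    rwa [hG.dist_eq_zero_iff.mp hd]
  · exfalso
    obtain ⟨z, hz⟩ := hne
    have : (G.dist y z) ∈ {m | ∃ t, c t = i ∧ G.dist y t = m} := ⟨z, hz, rfl⟩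
    rw [h0] at this
    exact this

private lemma color_eq_of_code_eq (hG : G.Connected) (c : V → Fin k) {x y : V}
    (h : rainbowCode G c x = rainbowCode G c y) : c y = c x := by
  have hy : distToColor G c y (c x) = 0 := by
    have h1 := congrFun h (c x)
    have h2 : distToColor G c x (c x) = 0 := distToColor_self c x
    exact h1.symm.trans h2
  exact eq_of_distToColor_eq_zero hG c ⟨x, rfl⟩ hy

private lemma distToColor_singleton (c : V → Fin k) {w : V} (z : V)
    (hw : ∀ t, c t = c w → t = w) : distToColor G c z (c w) = G.dist z w := by
  have hset : {m | ∃ y, c y = c w ∧ G.dist z y = m} = {G.dist z w} := by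
    ext m
    constructor
    · rintro ⟨y, hy, rfl⟩
      rw [hw y hy]
      rfl
    · rintro rfl
      exact ⟨w, rfl, rfl⟩
  rw [distToColor, hset, csInf_singleton]

private lemma tail_dropLast_eq {α : Type*} (l : List α) :
    l.tail.dropLast = l.dropLast.tail := by
  cases l with
  | nil => simp
  | cons a t =>
    cases t with
    | nil => simp
    | cons b t' => simp [List.dropLast_cons₂]

private lemma start_not_internal {u v : V} {p : G.Walk u v} (hp : p.IsPath) :
    u ∉ internalVertices p := by
  intro h
  have h1 : u ∈ p.support.tail := List.dropLast_subset _ h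
  have h2 := hp.support_nodup
  rw [p.support_eq_cons] at h2
  exact (List.nodup_cons.mp h2).1 h1

private lemma end_not_internal {u v : V} {p : G.Walk u v} (hp : p.IsPath) :
    v ∉ internalVertices p := by
  intro h
  have hnd : p.support.Nodup := hp.support_nodup
  have hne : p.support ≠ [] := p.support_ne_nil
  have hsp : p.support.dropLast ++ [v] = p.support := by
    have := List.dropLast_append_getLast hne
    rwa [p.getLast_support] at this
  have hvin : v ∈ p.support.dropLast := by
    have : v ∈ p.support.dropLast.tail := by
      rw [← tail_dropLast_eq]; exact h
    exact List.tail_subset _ this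
  rw [← hsp] at hnd
  rcases List.nodup_append'.mp hnd with ⟨-, -, hdisj⟩
  exact hdisj hvin (by simp)

private lemma internal_subset_support {u v : V} {p : G.Walk u v} {a : V}
    (ha : a ∈ internalVertices p) : a ∈ p.support :=
  List.mem_of_mem_tail (List.dropLast_subset _ ha)

private lemma nodup_map_internal {x y : V} {p : G.Walk x y} (hp : p.IsPath)
    {c : V → Fin k} {u v : V}
    (hc : ∀ a b, c a = c b → a = b ∨ (a = u ∧ b = v) ∨ (a = v ∧ b = u))
    (hu : u ∉ internalVertices p) :
    ((internalVertices p).map c).Nodup := by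
  have hnd : (internalVertices p).Nodup :=
    hp.support_nodup.sublist ((List.dropLast_sublist _).trans (List.tail_sublist _))
  refine List.Nodup.map_on ?_ hnd
  intro a ha b hb hab
  rcases hc a b hab with h | ⟨h1, h2⟩ | ⟨h1, h2⟩
  · exact h
  · exact absurd (h1 ▸ ha) hu
  · exact absurd (h2 ▸ hb) hu

private lemma exists_walk_avoiding (hG : G.Connected) {r u : V}
    (hmax : ∀ w, G.dist r w ≤ G.dist r u) {x : V} (hx : x ≠ u) :
    ∃ p : G.Walk x r, u ∉ p.support := by
  classical
  obtain ⟨p, hp⟩ := hG.exists_walk_length_eq_dist x r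
  refine ⟨p, fun hu => ?_⟩
  have h1 : G.dist x u ≤ (p.takeUntil u hu).length := SimpleGraph.dist_le _
  have h2 : G.dist u r ≤ (p.dropUntil u hu).length := SimpleGraph.dist_le _
  have h3 : (p.takeUntil u hu).length + (p.dropUntil u hu).length = p.length := by
    rw [← Walk.length_append, Walk.take_spec]
  have h5 : G.dist x r ≤ G.dist r u := by rw [SimpleGraph.dist_comm]; exact hmax x
  have h6 : G.dist u r = G.dist r u := SimpleGraph.dist_comm
  have h7 : G.dist x u = 0 := by omega
  exact hx (hG.dist_eq_zero_iff.mp h7)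

private lemma exists_path_avoiding (hG : G.Connected) {r u : V}
    (hmax : ∀ w, G.dist r w ≤ G.dist r u) {x y : V} (hx : x ≠ u) (hy : y ≠ u) :
    ∃ p : G.Walk x y, p.IsPath ∧ u ∉ p.support := by
  classical
  obtain ⟨p1, h1⟩ := exists_walk_avoiding hG hmax hx
  obtain ⟨p2, h2⟩ := exists_walk_avoiding hG hmax hy
  refine ⟨(p1.append p2.reverse).toPath, (p1.append p2.reverse).toPath.2, fun hu => ?_⟩
  have := Walk.support_toPath_subset _ hu
  rw [Walk.mem_support_append_iff, Walk.support_reverse, List.mem_reverse] at this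
  rcases this with h | h
  · exact h1 h
  · exact h2 h

private lemma code_eq_of_color_eq_complete (hadj : ∀ x y : V, x ≠ y → G.Adj x y)
    {c : V → Fin k} {x y : V} (h : c x = c y) :
    rainbowCode G c x = rainbowCode G c y := by
  have key : ∀ a b : V, c a = c b → ∀ i : Fin k, ∀ m,
      (∃ z, c z = i ∧ G.dist a z = m) → ∃ z, c z = i ∧ G.dist b z = m := by
    rintro a b hab i m ⟨z, hz, rfl⟩
    by_cases hza : z = a
    · subst hza
      exact ⟨b, hab ▸ hz, by rw [SimpleGraph.dist_self, SimpleGraph.dist_self]⟩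
    · by_cases hzb : z = b
      · subst hzb
        exact ⟨a, hab.symm ▸ hz, by rw [SimpleGraph.dist_comm]⟩
      · refine ⟨z, hz, ?_⟩
        rw [SimpleGraph.dist_eq_one_iff_adj.mpr (hadj a z fun hh => hza hh.symm),
          SimpleGraph.dist_eq_one_iff_adj.mpr (hadj b z fun hh => hzb hh.symm)]
  funext i
  show distToColor G c x i = distToColor G c y i
  unfold distToColor
  congr 1
  ext m
  exact ⟨key x y h i m, key y x h.symm i m⟩

private lemma rvcl_complete {V : Type*} [Fintype V] (G : SimpleGraph V) (hG : G.Connected)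
    (hadj : ∀ x y : V, x ≠ y → G.Adj x y) :
    rvcl G = Fintype.card V := by
  classical
  have hmem : Fintype.card V ∈ {k | ∃ c : V → Fin k, IsLocatingRainbowColoring G c} := by
    refine ⟨Fintype.equivFin V, ?_, ?_⟩
    · intro x y hxy
      refine ⟨Walk.cons (hadj x y hxy) Walk.nil, ?_, ?_⟩
      · simp [Walk.isPath_def, hxy]
      · simp [internalVertices]
    · intro x y h
      have := color_eq_of_code_eq hG _ h
      exact ((Fintype.equivFin V).injective this).symm
  refine le_antisymm (Nat.sInf_le hmem) (le_csInf ⟨_, hmem⟩ ?_)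
  rintro k ⟨c, -, hinj⟩
  have hcinj : Function.Injective c := by
    intro x y h
    exact hinj (code_eq_of_color_eq_complete hadj h)
  simpa using Fintype.card_le_of_injective c hcinj

private lemma rvcl_le_of_not_complete {V : Type*} [Fintype V] (G : SimpleGraph V)
    (hG : G.Connected) (hn : 3 ≤ Fintype.card V)
    {a b : V} (hab : a ≠ b) (hnadj : ¬ G.Adj a b) :
    rvcl G ≤ Fintype.card V - 1 := by
  classical
  have hne : Nonempty V := hG.nonempty
  obtain ⟨r⟩ := hne
  obtain ⟨u, -, hmax'⟩ := Finset.exists_max_image Finset.univ (G.dist r) ⟨r, Finset.mem_univ r⟩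
  have hmax : ∀ w, G.dist r w ≤ G.dist r u := fun w => hmax' w (Finset.mem_univ w)
  -- find a vertex `v` not distance-twin with `u`
  have hvw : ∃ v, v ≠ u ∧ ∃ w, w ≠ u ∧ w ≠ v ∧ G.dist u w ≠ G.dist v w := by
    by_contra hcon
    push_neg at hcon
    -- all pairwise distances are equal to some D
    have claim1 : ∀ q q' : V, q ≠ u → q' ≠ u → q ≠ q' → G.dist u q = G.dist u q' := by
      intro q q' hq hq' hqq
      have e1 : G.dist u q' = G.dist q q' := hcon q hq q' hq' (fun h => hqq h.symm)
      have e2 : G.dist u q = G.dist q' q := hcon q' hq' q hq hqq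
      rw [e2, SimpleGraph.dist_comm, ← e1]
    obtain ⟨q1, hq1m, q2, hq2m, hq12⟩ := Finset.one_lt_card.mp
      (show 1 < (Finset.univ.erase u).card by
        rw [Finset.card_erase_of_mem (Finset.mem_univ u), Finset.card_univ]; omega)
    have hq1 : q1 ≠ u := Finset.ne_of_mem_erase hq1m
    have hq2 : q2 ≠ u := Finset.ne_of_mem_erase hq2m
    set D := G.dist u q1 with hD
    have hallu : ∀ q : V, q ≠ u → G.dist u q = D := by
      intro q hq
      by_cases h : q = q1
      · rw [h]
      · exact claim1 q q1 hq hq1 h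
    have hall : ∀ p q : V, p ≠ q → G.dist p q = D := by
      intro p q hpq
      by_cases hp : p = u
      · exact hp ▸ hallu q (fun h => hpq (hp ▸ h.symm ▸ rfl))
      · by_cases hq : q = u
        · subst hq
          rw [SimpleGraph.dist_comm]
          exact hallu p hp
        · rw [← hcon p hp q hq (fun h => hpq h.symm)]
          exact hallu q hq
    -- D ≥ 2 since a,b are non-adjacent
    have hD2 : 2 ≤ D := by
      have h1 : G.dist a b = D := hall a b hab
      have h0 : G.dist a b ≠ 0 := fun h => hab (hG.dist_eq_zero_iff.mp h)
      have hone : G.dist a b ≠ 1 := fun h => hnadj (SimpleGraph.dist_eq_one_iff_adj.mp h)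
      omega
    -- but u has a neighbor at distance 1
    obtain ⟨p, hp⟩ := hG.exists_walk_length_eq_dist u q1
    have hlen : 0 < p.length := by
      rw [hp, ← hD]; omega
    have hadj1 : G.Adj (p.getVert 0) (p.getVert 1) := p.adj_getVert_succ hlen
    rw [p.getVert_zero] at hadj1
    have hzu : p.getVert 1 ≠ u := hadj1.ne'
    have := hallu _ hzu
    rw [SimpleGraph.dist_eq_one_iff_adj.mpr hadj1] at this
    omega
  obtain ⟨v, hvu, w, hwu, hwv, hdw⟩ := hvw
  -- build the coloring with card V - 1 colors
  have hcard : Fintype.card {x : V // x ≠ u} = Fintype.card V - 1 := by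
    rw [Fintype.card_subtype, Finset.filter_ne', Finset.card_erase_of_mem (Finset.mem_univ u),
      Finset.card_univ]
  let g : {x : V // x ≠ u} ≃ Fin (Fintype.card V - 1) := Fintype.equivFinOfCardEq hcard
  let c : V → Fin (Fintype.card V - 1) := fun x =>
    if h : x = u then g ⟨v, hvu⟩ else g ⟨x, h⟩
  have hcinj : ∀ x y, c x = c y → x = y ∨ (x = u ∧ y = v) ∨ (x = v ∧ y = u) := by
    intro x y h
    by_cases hx : x = u <;> by_cases hy : y = u
    · exact Or.inl (hx.trans hy.symm)
    · simp only [c, dif_pos hx, dif_neg hy] at h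
      have := Subtype.ext_iff.mp (g.injective h)
      exact Or.inr (Or.inl ⟨hx, this.symm⟩)
    · simp only [c, dif_neg hx, dif_pos hy] at h
      have := Subtype.ext_iff.mp (g.injective h)
      exact Or.inr (Or.inr ⟨this, hy⟩)
    · simp only [c, dif_neg hx, dif_neg hy] at h
      exact Or.inl (Subtype.ext_iff.mp (g.injective h))
  have hrb : IsRainbowVertexColoring G c := by
    intro x y hxy
    by_cases hx : x = u
    · subst hx
      obtain ⟨p, hp⟩ := hG.exists_walk_length_eq_dist x y
      have hpath := p.isPath_of_length_eq_dist hp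
      exact ⟨p, hpath, nodup_map_internal hpath hcinj (start_not_internal hpath)⟩
    · by_cases hy : y = u
      · subst hy
        obtain ⟨p, hp⟩ := hG.exists_walk_length_eq_dist x y
        have hpath := p.isPath_of_length_eq_dist hp
        exact ⟨p, hpath, nodup_map_internal hpath hcinj (end_not_internal hpath)⟩
      · obtain ⟨p, hpath, hu⟩ := exists_path_avoiding hG hmax hx hy
        exact ⟨p, hpath,
          nodup_map_internal hpath hcinj (fun h => hu (internal_subset_support h))⟩
  have hsing : ∀ t, c t = c w → t = w := by
    intro t ht
    rcases hcinj t w ht with h | ⟨h1, h2⟩ | ⟨h1, h2⟩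
    · exact h
    · exact absurd h2 hwv
    · exact absurd h2 hwu
  have hloc : Function.Injective (rainbowCode G c) := by
    intro x y h
    rcases hcinj x y ((color_eq_of_code_eq hG c h).symm) with h1 | ⟨h1, h2⟩ | ⟨h1, h2⟩
    · exact h1
    · exfalso
      have hx1 : rainbowCode G c x (c w) = G.dist x w := distToColor_singleton c x hsing
      have hy1 : rainbowCode G c y (c w) = G.dist y w := distToColor_singleton c y hsing
      rw [h] at hx1
      rw [hx1] at hy1
      rw [h1, h2] at hy1
      exact hdw hy1
    · exfalso
      have hx1 : rainbowCode G c x (c w) = G.dist x w := distToColor_singleton c x hsing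
      have hy1 : rainbowCode G c y (c w) = G.dist y w := distToColor_singleton c y hsing
      rw [h] at hx1
      rw [hx1] at hy1
      rw [h1, h2] at hy1
      exact hdw hy1.symm
  exact Nat.sInf_le ⟨c, hrb, hloc⟩

end Aux

open LocatingRainbow in
/-- For a finite connected simple graph of order `n ≥ 3`, one has `rvcl(G) = n` if and
only if `G` is isomorphic to the complete graph on its vertex set. -/
theorem rvcl_eq_card_iff_complete {V : Type*} [Fintype V] (G : SimpleGraph V)
    (hG : G.Connected) (hn : 3 ≤ Fintype.card V) :
    rvcl G = Fintype.card V ↔ Nonempty (G ≃g (⊤ : SimpleGraph V)) := by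
  constructor
  · intro h
    by_contra hne
    have hex : ∃ a b : V, a ≠ b ∧ ¬ G.Adj a b := by
      by_contra h2
      push_neg at h2
      have : G = ⊤ := by
        ext x y
        simp only [SimpleGraph.top_adj]
        exact ⟨fun hxy => hxy.ne, fun hxy => h2 x y hxy⟩
      refine hne ?_
      rw [this]
      exact ⟨SimpleGraph.Iso.refl⟩
    obtain ⟨a, b, hab, hnadj⟩ := hex
    have hle := rvcl_le_of_not_complete G hG hn hab hnadj
    omega
  · rintro ⟨e⟩
    have hadj : ∀ x y : V, x ≠ y → G.Adj x y := by
      intro x y hxy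
      have : (⊤ : SimpleGraph V).Adj (e x) (e y) := by
        simp only [SimpleGraph.top_adj]
        exact fun h => hxy (e.injective h)
      exact e.map_adj_iff.mp this
    exact rvcl_complete G hG hadj
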